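/- The optimistic edit-distance loss increases by at most one per character (δ_o ≤ 1): Let C be a type with decidable equality, let t and y be lists over C, and let c ∈ C. Define f(y) = min over 0 ≤ k ≤ |t| of the Levenshtein distance (with unit insertion, deletion and substitution costs) between y and the prefix t.take k. Then f(y ++ [c]) ≤ f(y) + 1. -/

import Mathlib

/-! Levenshtein edit distance, as it was defined in Mathlib (`Mathlib/Data/List/EditDistance/Defs.lean`),
which has since been removed from Mathlib. -/

namespace Levenshtein

/-- A cost structure for Levenshtein edit distance. -/
structure Cost (α β δ : Type*) where
  /-- Cost to delete an element from a list. -/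
  delete : α → δ
  /-- Cost in insert an element into a list. -/
  insert : β → δ
  /-- Cost to substitute one element for another in a list. -/
  substitute : α → β → δ

/-- The default cost structure, for which all operations cost `1`. -/
def defaultCost {α : Type*} [DecidableEq α] : Cost α α ℕ where
  delete _ := 1
  insert _ := 1
  substitute a b := if a = b then 0 else 1

/-- (Implementation detail for `levenshtein`) -/
def impl {α β δ : Type*} [AddZeroClass δ] [Min δ] (C : Cost α β δ)
    (xs : List α) (y : β) (d : {r : List δ // 0 < r.length}) : {r : List δ // 0 < r.length} :=
  let ⟨ds, w⟩ := d
  xs.zip (ds.zip ds.tail) |>.foldr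
    (init := ⟨[C.insert y + ds.getLast (List.length_pos_iff_ne_nil.mp w)], by simp⟩)
    (fun ⟨x, d₀, d₁⟩ ⟨r, w⟩ =>
      ⟨min (C.delete x + r[0]) (min (C.insert y + d₀) (C.substitute x y + d₁)) :: r, by simp⟩)

end Levenshtein

/-- `suffixLevenshtein C xs ys` computes the Levenshtein distance
from each suffix of the list `xs` to the list `ys`. -/
def suffixLevenshtein {α β δ : Type*} [AddZeroClass δ] [Min δ] (C : Levenshtein.Cost α β δ)
    (xs : List α) (ys : List β) : {r : List δ // 0 < r.length} :=
  ys.foldr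
    (Levenshtein.impl C xs)
    (xs.foldr (init := ⟨[0], by simp⟩) (fun a ⟨r, _⟩ => ⟨(C.delete a + r[0]) :: r, by simp⟩))

/-- `levenshtein C xs ys` computes the Levenshtein distance from `xs` to `ys`. -/
def levenshtein {α β δ : Type*} [AddZeroClass δ] [Min δ] (C : Levenshtein.Cost α β δ)
    (xs : List α) (ys : List β) : δ :=
  let ⟨r, w⟩ := suffixLevenshtein C xs ys
  r[0]

section LevHelpers
variable {α β δ : Type*} [AddZeroClass δ] [Min δ] (C : Levenshtein.Cost α β δ)

private theorem lev_impl_cons {x : α} {xs : List α} {y : β} {d : δ} {ds : List δ} (w' : 0 < List.length ds)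
    (w : 0 < List.length (d :: ds)) :
    Levenshtein.impl C (x :: xs) y ⟨d :: ds, w⟩ =
      let ⟨r, w⟩ := Levenshtein.impl C xs y ⟨ds, w'⟩
      ⟨min (C.delete x + r[0]) (min (C.insert y + d) (C.substitute x y + ds[0])) :: r, by simp⟩ :=
  match ds, w' with | _ :: _, _ => rfl

private theorem lev_impl_length {xs : List α} {y : β} (d : {r : List δ // 0 < r.length})
    (w : d.1.length = xs.length + 1) :
    (Levenshtein.impl C xs y d).1.length = xs.length + 1 := by
  induction xs generalizing d with
  | nil => rfl
  | cons x xs ih =>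
    match d, w with
    | ⟨d₁ :: d₂ :: ds, _⟩, w =>
      rw [lev_impl_cons C (by simp)]
      simp only [List.length_cons]
      congr 1
      exact ih ⟨d₂ :: ds, (by simp)⟩ (by simpa using w)

private theorem lev_suffix_length (xs : List α) (ys : List β) :
    (suffixLevenshtein C xs ys).1.length = xs.length + 1 := by
  induction ys with
  | nil =>
    dsimp [suffixLevenshtein]
    induction xs with
    | nil => rfl
    | cons _ xs ih => simp_all
  | cons y ys ih =>
    show (Levenshtein.impl C xs y (suffixLevenshtein C xs ys)).1.length = _
    rw [lev_impl_length]
    exact ih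

private theorem lev_aux {x y : {r : List δ // 0 < r.length}}
    (w₀ : x.1[0]'x.2 = y.1[0]'y.2) (w : x.1.tail = y.1.tail) : x = y := by
  match x, y with
  | ⟨hx :: tx, _⟩, ⟨hy :: ty, _⟩ => simp_all

private theorem lev_suffix_cons₁ (x : α) (xs : List α) (ys : List β) :
    suffixLevenshtein C (x :: xs) ys =
      ⟨levenshtein C (x :: xs) ys :: (suffixLevenshtein C xs ys).1, by simp⟩ := by
  induction ys with
  | nil => rfl
  | cons y ys ih =>
    apply lev_aux
    · rfl
    · show (Levenshtein.impl C (x :: xs) y (suffixLevenshtein C (x :: xs) ys)).1.tail = _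
      rw [ih, lev_impl_cons C (by simp [lev_suffix_length])]
      rfl

private theorem lev_impl_nil_zero (y : β) (S : {r : List δ // 0 < r.length}) :
    (Levenshtein.impl C [] y S).1[0]'(Levenshtein.impl C [] y S).2 =
      C.insert y + S.1.getLast (List.length_pos_iff_ne_nil.mp S.2) := by
  obtain ⟨s, hs⟩ := S
  rfl

private theorem lev_impl_cons_zero (x : α) (xs : List α) (y : β) (L : δ)
    (S : {r : List δ // 0 < r.length}) (h : 0 < (L :: S.1).length) :
    (Levenshtein.impl C (x :: xs) y ⟨L :: S.1, h⟩).1[0]'(Levenshtein.impl C (x :: xs) y ⟨L :: S.1, h⟩).2 =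
      min (C.delete x + (Levenshtein.impl C xs y S).1[0]'(Levenshtein.impl C xs y S).2)
        (min (C.insert y + L) (C.substitute x y + S.1[0]'S.2)) := by
  obtain ⟨s, hs⟩ := S
  match s, hs with
  | a :: r, _ => rfl

@[simp] theorem levenshtein_nil_nil : levenshtein C [] [] = 0 := rfl

@[simp] theorem levenshtein_nil_cons (y : β) (ys : List β) :
    levenshtein C [] (y :: ys) = C.insert y + levenshtein C [] ys := by
  have hl := lev_suffix_length C ([] : List α) ys
  show (Levenshtein.impl C [] y (suffixLevenshtein C [] ys)).1[0]'(Levenshtein.impl C [] y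
    (suffixLevenshtein C [] ys)).2 = C.insert y + (suffixLevenshtein C [] ys).1[0]'(suffixLevenshtein C [] ys).2
  rw [lev_impl_nil_zero]
  generalize suffixLevenshtein C [] ys = S at hl ⊢
  obtain ⟨s, hs⟩ := S
  match s, hs, hl with
  | [a], _, _ => rfl

@[simp] theorem levenshtein_cons_nil (x : α) (xs : List α) :
    levenshtein C (x :: xs) [] = C.delete x + levenshtein C xs [] := rfl

theorem levenshtein_cons_cons (x : α) (xs : List α) (y : β) (ys : List β) :
    levenshtein C (x :: xs) (y :: ys) =
      min (C.delete x + levenshtein C xs (y :: ys))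
        (min (C.insert y + levenshtein C (x :: xs) ys)
          (C.substitute x y + levenshtein C xs ys)) := by
  show (Levenshtein.impl C (x :: xs) y (suffixLevenshtein C (x :: xs) ys)).1[0]'(by
    simp [lev_impl_length, lev_suffix_length]) = _
  simp only [lev_suffix_cons₁]
  rw [lev_impl_cons_zero]
  rfl

end LevHelpers

@[simp] theorem Levenshtein.defaultCost_insert {α : Type*} [DecidableEq α] (a : α) :
    (Levenshtein.defaultCost : Levenshtein.Cost α α ℕ).insert a = 1 := rfl

@[simp] theorem Levenshtein.defaultCost_delete {α : Type*} [DecidableEq α] (a : α) :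
    (Levenshtein.defaultCost : Levenshtein.Cost α α ℕ).delete a = 1 := rfl

private lemma lev_append_single_le {C : Type*} [DecidableEq C] (c : C) :
    ∀ (xs ys : List C),
      levenshtein Levenshtein.defaultCost (xs ++ [c]) ys ≤
        levenshtein Levenshtein.defaultCost xs ys + 1 := by
  intro xs
  induction xs with
  | nil =>
    intro ys
    induction ys with
    | nil => simp
    | cons z ys ih =>
      simp only [List.nil_append] at ih ⊢
      rw [levenshtein_cons_cons]
      refine le_trans (min_le_of_right_le (min_le_of_left_le le_rfl)) ?_
      simp only [levenshtein_nil_cons, Levenshtein.defaultCost_insert]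
      omega
  | cons x xs ih =>
    intro ys
    induction ys with
    | nil =>
      simp only [List.cons_append, levenshtein_cons_nil]
      have := ih []
      omega
    | cons z ys ih2 =>
      simp only [List.cons_append] at ih2 ⊢
      rw [levenshtein_cons_cons, levenshtein_cons_cons]
      have h1 := ih (z :: ys)
      have h2 := ih2
      have h3 := ih ys
      simp only [Levenshtein.defaultCost_delete, Levenshtein.defaultCost_insert] at *
      omega

/-- The optimistic edit-distance loss increases by at most one per
character (`δ_o ≤ 1`): with
`f y = min_{0 ≤ k ≤ |t|} ρ_levenshtein(y, t.take k)` (unit insertion,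
deletion and substitution costs), `f (y ++ [c]) ≤ f y + 1`. -/
theorem optimistic_loss_step_le_one {C : Type*} [DecidableEq C]
    (t y : List C) (c : C) :
    (Finset.range (t.length + 1)).inf' Finset.nonempty_range_add_one
        (fun k => levenshtein Levenshtein.defaultCost (y ++ [c]) (t.take k)) ≤
      (Finset.range (t.length + 1)).inf' Finset.nonempty_range_add_one
        (fun k => levenshtein Levenshtein.defaultCost y (t.take k)) + 1 := by
  obtain ⟨k, hk, hval⟩ := Finset.exists_mem_eq_inf' Finset.nonempty_range_add_one
    (fun k => levenshtein Levenshtein.defaultCost y (t.take k))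
  rw [hval]
  exact le_trans (Finset.inf'_le _ hk) (lev_append_single_le c y (t.take k))
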